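/- arXiv:2302.03059 — 7 statements merged into one kernel-verified Lean document; each statement's English description precedes it below -/
import Mathlib

section
/- The map T₁ : (ℂ \ {0})³ → (ℂ \ {0})³ defined by T₁(x,y,z) = (y, x, y·z·x⁻¹) satisfies the tetrahedron equation T¹²³ ∘ T¹⁴⁵ ∘ T²⁴⁶ ∘ T³⁵⁶ = T³⁵⁶ ∘ T²⁴⁶ ∘ T¹⁴⁵ ∘ T¹²³, i.e. it is a tetrahedron map. -/
section Tetra

variable {X : Type*}

/-- `T` acting on factors 1,2,3 of `X⁶`. -/
def lift123 (T : X × X × X → X × X × X) :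
    X × X × X × X × X × X → X × X × X × X × X × X
  | (a, b, c, d, e, f) =>
    match T (a, b, c) with
    | (a', b', c') => (a', b', c', d, e, f)

/-- `T` acting on factors 1,4,5 of `X⁶`. -/
def lift145 (T : X × X × X → X × X × X) :
    X × X × X × X × X × X → X × X × X × X × X × X
  | (a, b, c, d, e, f) =>
    match T (a, d, e) with
    | (a', d', e') => (a', b, c, d', e', f)

/-- `T` acting on factors 2,4,6 of `X⁶`. -/
def lift246 (T : X × X × X → X × X × X) :
    X × X × X × X × X × X → X × X × X × X × X × X
  | (a, b, c, d, e, f) =>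
    match T (b, d, f) with
    | (b', d', f') => (a, b', c, d', e, f')

/-- `T` acting on factors 3,5,6 of `X⁶`. -/
def lift356 (T : X × X × X → X × X × X) :
    X × X × X × X × X × X → X × X × X × X × X × X
  | (a, b, c, d, e, f) =>
    match T (c, e, f) with
    | (c', e', f') => (a, b, c', d, e', f')

/-- The Zamolodchikov tetrahedron equation for a map `T : X³ → X³`. -/
def IsTetrahedronMap (T : X × X × X → X × X × X) : Prop :=
  lift123 T ∘ lift145 T ∘ lift246 T ∘ lift356 T =
    lift356 T ∘ lift246 T ∘ lift145 T ∘ lift123 T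

end Tetra

/-- The map `T₁(x,y,z) = (y, x, y·z·x⁻¹)` on `(ℂ \ {0})³`. -/
def T1 : ℂˣ × ℂˣ × ℂˣ → ℂˣ × ℂˣ × ℂˣ :=
  fun (x, y, z) => (y, x, y * z * x⁻¹)

theorem T1_isTetrahedronMap : IsTetrahedronMap T1 := by
  funext p
  obtain ⟨a, b, c, d, e, f⟩ := p
  simp only [IsTetrahedronMap, Function.comp, lift123, lift145, lift246, lift356, T1]
  ext <;> simp <;> field_simp <;> ring
end

section
/- Let T₁(x,y,z) = (y, x, y·z·x⁻¹), T₂(x,y,z) = (x·y·z⁻¹, z, y), T₃(x,y,z) = (x², y·x⁻¹, x·z), T₄(x,y,z) = (x·z, y·z⁻¹, z²) be maps (ℂ \ {0})³ → (ℂ \ {0})³. Then the maps T₁ and T₂ are involutive (Tᵢ ∘ Tᵢ = id for i = 1,2), and the functions I₁(x,y,z) = x·y and I₂(x,y,z) = y·z are invariants of each of T₁, T₂, T₃, T₄, i.e. Iⱼ ∘ Tᵢ = Iⱼ for j = 1,2 and i = 1,2,3,4. -/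
def T2 : ℂˣ × ℂˣ × ℂˣ → ℂˣ × ℂˣ × ℂˣ := fun (x, y, z) => (x * y * z⁻¹, z, y)

def T3 : ℂˣ × ℂˣ × ℂˣ → ℂˣ × ℂˣ × ℂˣ := fun (x, y, z) => (x ^ 2, y * x⁻¹, x * z)

def T4 : ℂˣ × ℂˣ × ℂˣ → ℂˣ × ℂˣ × ℂˣ := fun (x, y, z) => (x * z, y * z⁻¹, z ^ 2)

/-- The invariant `I₁(x,y,z) = x·y`. -/
def I1 : ℂˣ × ℂˣ × ℂˣ → ℂ := fun (x, y, _) => (x : ℂ) * (y : ℂ)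

/-- The invariant `I₂(x,y,z) = y·z`. -/
def I2 : ℂˣ × ℂˣ × ℂˣ → ℂ := fun (_, y, z) => (y : ℂ) * (z : ℂ)

theorem T1_T2_involutive_and_invariants :
    (T1 ∘ T1 = id) ∧ (T2 ∘ T2 = id) ∧
    (I1 ∘ T1 = I1) ∧ (I1 ∘ T2 = I1) ∧ (I1 ∘ T3 = I1) ∧ (I1 ∘ T4 = I1) ∧
    (I2 ∘ T1 = I2) ∧ (I2 ∘ T2 = I2) ∧ (I2 ∘ T3 = I2) ∧ (I2 ∘ T4 = I2) := by
  refine ⟨?_, ?_, ?_, ?_, ?_, ?_, ?_, ?_, ?_, ?_⟩ <;>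
  · funext ⟨x, y, z⟩
    simp [T1, T2, T3, T4, I1, I2, Units.val_inv_eq_inv_val]
    try push_cast
    try field_simp
    try ring
    try group
end

section
/- Let L₁₂(x), L₁₃(x), L₂₃(x) be the 3×3 complex matrices L₁₂(x) = [[x,0,0],[0,x⁻¹,0],[0,0,1]], L₁₃(x) = [[x,0,0],[0,1,0],[0,0,x⁻¹]], L₂₃(x) = [[1,0,0],[0,x,0],[0,0,x⁻¹]] for x ∈ ℂ \ {0}. Then for each of the four maps T₁(x,y,z) = (y, x, y·z·x⁻¹), T₂(x,y,z) = (x·y·z⁻¹, z, y), T₃(x,y,z) = (x², y·x⁻¹, x·z), T₄(x,y,z) = (x·z, y·z⁻¹, z²) on (ℂ \ {0})³, the relation (u,v,w) = Tᵢ(x,y,z) implies the matrix identity L₁₂(u)·L₁₃(v)·L₂₃(w) = L₂₃(z)·L₁₃(y)·L₁₂(x). -/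
noncomputable section

def L12 (x : ℂˣ) : Matrix (Fin 3) (Fin 3) ℂ :=
  !![(x : ℂ), 0, 0; 0, (x : ℂ)⁻¹, 0; 0, 0, 1]

def L13 (x : ℂˣ) : Matrix (Fin 3) (Fin 3) ℂ :=
  !![(x : ℂ), 0, 0; 0, 1, 0; 0, 0, (x : ℂ)⁻¹]

def L23 (x : ℂˣ) : Matrix (Fin 3) (Fin 3) ℂ :=
  !![1, 0, 0; 0, (x : ℂ), 0; 0, 0, (x : ℂ)⁻¹]

lemma diag3_congr {a b c a' b' c' : ℂ} (h1 : a = a') (h2 : b = b') (h3 : c = c') :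
    !![a, 0, 0; 0, b, 0; 0, 0, c] = !![a', 0, 0; 0, b', 0; 0, 0, c'] := by
  rw [h1, h2, h3]

lemma LHS_eq (u v w : ℂˣ) :
    L12 u * L13 v * L23 w =
      !![(u:ℂ) * v, 0, 0; 0, (u:ℂ)⁻¹ * w, 0; 0, 0, (v:ℂ)⁻¹ * (w:ℂ)⁻¹] := by
  simp [L12, L13, L23, Matrix.mul_fin_three]

lemma RHS_eq (x y z : ℂˣ) :
    L23 z * L13 y * L12 x =
      !![(y:ℂ) * x, 0, 0; 0, (z:ℂ) * (x:ℂ)⁻¹, 0; 0, 0, (z:ℂ)⁻¹ * (y:ℂ)⁻¹] := by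
  simp [L12, L13, L23, Matrix.mul_fin_three]

theorem Lax_representation_T1_T2_T3_T4 :
    ∀ x y z u v w : ℂˣ,
      ((u, v, w) = T1 (x, y, z) →
        L12 u * L13 v * L23 w = L23 z * L13 y * L12 x) ∧
      ((u, v, w) = T2 (x, y, z) →
        L12 u * L13 v * L23 w = L23 z * L13 y * L12 x) ∧
      ((u, v, w) = T3 (x, y, z) →
        L12 u * L13 v * L23 w = L23 z * L13 y * L12 x) ∧
      ((u, v, w) = T4 (x, y, z) →
        L12 u * L13 v * L23 w = L23 z * L13 y * L12 x) := by
  intro x y z u v w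
  have hx : (x:ℂ) ≠ 0 := x.ne_zero
  have hy : (y:ℂ) ≠ 0 := y.ne_zero
  have hz : (z:ℂ) ≠ 0 := z.ne_zero
  refine ⟨?_, ?_, ?_, ?_⟩ <;> intro h <;>
    simp only [T1, T2, T3, T4, Prod.mk.injEq] at h <;>
    obtain ⟨h1, h2, h3⟩ := h <;> subst h1 h2 h3 <;>
    rw [LHS_eq, RHS_eq] <;>
    simp only [Units.val_mul, Units.val_inv_eq_inv_val, Units.val_pow_eq_pow_val] <;>
    exact diag3_congr (by field_simp <;> ring) (by field_simp <;> ring) (by field_simp <;> ring)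
end
end

section
/- Let G be an arbitrary group. The map 𝐓₁ : G³ → G³ defined by 𝐓₁(x,y,z) = (y, x, y·z·x⁻¹) satisfies the tetrahedron equation T¹²³ ∘ T¹⁴⁵ ∘ T²⁴⁶ ∘ T³⁵⁶ = T³⁵⁶ ∘ T²⁴⁶ ∘ T¹⁴⁵ ∘ T¹²³. Moreover (𝐓₁ ∘ 𝐓₁)(x,y,z) = (x, y, x·y·z·x⁻¹·y⁻¹) for all x,y,z ∈ G; hence if G is noncommutative, then 𝐓₁ is not involutive. -/
variable {G : Type*} [Group G]

/-- The map `𝐓₁(x,y,z) = (y, x, y·z·x⁻¹)` on `G³` for an arbitrary group `G`. -/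
def Tb1 : G × G × G → G × G × G := fun (x, y, z) => (y, x, y * z * x⁻¹)

theorem Tb1_tetrahedron_noninvolutive (G : Type*) [Group G] :
    IsTetrahedronMap (Tb1 (G := G)) ∧
    (∀ x y z : G, (Tb1 ∘ Tb1) (x, y, z) = (x, y, x * y * z * x⁻¹ * y⁻¹)) ∧
    ((∃ a b : G, a * b ≠ b * a) → Tb1 ∘ Tb1 ≠ (id : G × G × G → G × G × G)) := by
  refine ⟨?_, ?_, ?_⟩
  · funext ⟨a,b,c,d,e,f⟩
    simp only [lift123, lift145, lift246, lift356, Tb1, Function.comp]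
    refine Prod.ext (by group) (Prod.ext (by group) (Prod.ext (by group)
      (Prod.ext (by group) (Prod.ext (by group) (by group)))))
  · intro x y z
    simp only [Tb1, Function.comp]
    refine Prod.ext (by group) (Prod.ext (by group) (by group))
  · rintro ⟨a,b,hab⟩ h
    have := congrArg (fun g => (g (a, b, 1)).2.2) h
    simp only [Tb1, Function.comp, id] at this
    have h1 : a * b * a⁻¹ * b⁻¹ = 1 := by rw [← this]; group
    exact hab (commutatorElement_eq_one_iff_mul_comm.mp h1)
end

section
/- Let G be an arbitrary group. The map 𝐓₂ : G³ → G³ defined by 𝐓₂(x,y,z) = (y·x·z⁻¹, z, y) satisfies the tetrahedron equation T¹²³ ∘ T¹⁴⁵ ∘ T²⁴⁶ ∘ T³⁵⁶ = T³⁵⁶ ∘ T²⁴⁶ ∘ T¹⁴⁵ ∘ T¹²³. Moreover, if G is noncommutative, then 𝐓₂ is not involutive: there exists (x,y,z) ∈ G³ with (𝐓₂ ∘ 𝐓₂)(x,y,z) ≠ (x,y,z). -/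
variable {G : Type*} [Group G]

/-- The map `𝐓₂(x,y,z) = (y·x·z⁻¹, z, y)` on `G³` for an arbitrary group `G`. -/
def Tb2 : G × G × G → G × G × G := fun (x, y, z) => (y * x * z⁻¹, z, y)

theorem Tb2_tetrahedron_noninvolutive (G : Type*) [Group G] :
    IsTetrahedronMap (Tb2 (G := G)) ∧
    ((∃ a b : G, a * b ≠ b * a) →
      ∃ x y z : G, (Tb2 ∘ Tb2) (x, y, z) ≠ (x, y, z)) := by
  constructor
  · funext p
    obtain ⟨a, b, c, d, e, f⟩ := p
    simp only [IsTetrahedronMap, lift123, lift145, lift246, lift356, Tb2, Function.comp_apply,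
      Prod.mk.injEq]
    refine ⟨?_, trivial⟩
    group
  · rintro ⟨a, b, hab⟩
    refine ⟨1, b, a, fun h => hab ?_⟩
    simp only [Function.comp_apply, Tb2, Prod.mk.injEq] at h
    have h1 := h.1
    rw [mul_one] at h1
    have h2 : a * (b * a⁻¹) * b⁻¹ * (b * a) = 1 * (b * a) := by rw [h1]
    group at h2
    simpa using h2
end

section
/- Let G be an arbitrary group. The map 𝐓̂₁ : G³ → G³ defined by 𝐓̂₁(x,y,z) = (x, x·z, x⁻¹·y) satisfies the tetrahedron equation T¹²³ ∘ T¹⁴⁵ ∘ T²⁴⁶ ∘ T³⁵⁶ = T³⁵⁶ ∘ T²⁴⁶ ∘ T¹⁴⁵ ∘ T¹²³ and is involutive: 𝐓̂₁ ∘ 𝐓̂₁ = id. -/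
variable {G : Type*} [Group G]

/-- The map `𝐓̂₁(x,y,z) = (x, x·z, x⁻¹·y)` on `G³` for an arbitrary group `G`. -/
def Tbh1 : G × G × G → G × G × G := fun (x, y, z) => (x, x * z, x⁻¹ * y)

theorem Tbh1_tetrahedron_involutive (G : Type*) [Group G] :
    IsTetrahedronMap (Tbh1 (G := G)) ∧ (Tbh1 ∘ Tbh1 = (id : G × G × G → G × G × G)) := by
  constructor
  · funext ⟨a, b, c, d, e, f⟩
    simp [lift123, lift145, lift246, lift356, Tbh1, mul_assoc]
  · funext ⟨x, y, z⟩
    simp [Tbh1]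
end

section
/- Let G be an arbitrary group. The map 𝐓̂₂ : G³ → G³ defined by 𝐓̂₂(x,y,z) = (y·z⁻¹, x·z, z) satisfies the tetrahedron equation T¹²³ ∘ T¹⁴⁵ ∘ T²⁴⁶ ∘ T³⁵⁶ = T³⁵⁶ ∘ T²⁴⁶ ∘ T¹⁴⁵ ∘ T¹²³ and is involutive: 𝐓̂₂ ∘ 𝐓̂₂ = id. -/
variable {G : Type*} [Group G]

/-- The map `𝐓̂₂(x,y,z) = (y·z⁻¹, x·z, z)` on `G³` for an arbitrary group `G`. -/
def Tbh2 : G × G × G → G × G × G := fun (x, y, z) => (y * z⁻¹, x * z, z)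

theorem Tbh2_tetrahedron_involutive (G : Type*) [Group G] :
    IsTetrahedronMap (Tbh2 (G := G)) ∧ (Tbh2 ∘ Tbh2 = (id : G × G × G → G × G × G)) := by
  constructor
  · funext p
    obtain ⟨a, b, c, d, e, f⟩ := p
    simp only [IsTetrahedronMap, lift123, lift145, lift246, lift356, Tbh2, Function.comp]
    simp [mul_assoc]
  · funext p
    obtain ⟨x, y, z⟩ := p
    simp [Tbh2, mul_assoc]
end
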